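/- Let T ⊆ {AX, AG} be nonempty and φ a satisfiable flat CTL formula (temporal depth ≤ 1) over the standard Boolean base using only the operators in T and their duals. Then φ has a serial model of extent at most |T| and of size O(|φ|). -/

import Mathlib

def Serial {W : Type} (R : W → W → Prop) : Prop := ∀ w, ∃ u, R w u

def IsPath {W : Type} (R : W → W → Prop) (π : ℕ → W) : Prop := ∀ i, R (π i) (π (i+1))

structure Kripke (W : Type) where
  R : W → W → Prop
  V : ℕ → W → Prop

inductive CTL where
  | atom : ℕ → CTL
  | neg  : CTL → CTL
  | and  : CTL → CTL → CTL
  | or   : CTL → CTL → CTL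
  | AX : CTL → CTL
  | EX : CTL → CTL
  | AF : CTL → CTL
  | EF : CTL → CTL
  | AG : CTL → CTL
  | EG : CTL → CTL
  | AU : CTL → CTL → CTL
  | EU : CTL → CTL → CTL
  | AR : CTL → CTL → CTL
  | ER : CTL → CTL → CTL
deriving DecidableEq

def sat {W : Type} (K : Kripke W) : CTL → W → Prop
  | .atom p, w => K.V p w
  | .neg φ, w => ¬ sat K φ w
  | .and φ ψ, w => sat K φ w ∧ sat K ψ w
  | .or φ ψ, w => sat K φ w ∨ sat K ψ w
  | .AX φ, w => ∀ π : ℕ → W, IsPath K.R π → π 0 = w → sat K φ (π 1)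
  | .EX φ, w => ∃ π : ℕ → W, IsPath K.R π ∧ π 0 = w ∧ sat K φ (π 1)
  | .AF φ, w => ∀ π : ℕ → W, IsPath K.R π → π 0 = w → ∃ i, sat K φ (π i)
  | .EF φ, w => ∃ π : ℕ → W, IsPath K.R π ∧ π 0 = w ∧ ∃ i, sat K φ (π i)
  | .AG φ, w => ∀ π : ℕ → W, IsPath K.R π → π 0 = w → ∀ i, sat K φ (π i)
  | .EG φ, w => ∃ π : ℕ → W, IsPath K.R π ∧ π 0 = w ∧ ∀ i, sat K φ (π i)
  | .AU φ ψ, w => ∀ π : ℕ → W, IsPath K.R π → π 0 = w →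
      ∃ i, sat K ψ (π i) ∧ ∀ j, j < i → sat K φ (π j)
  | .EU φ ψ, w => ∃ π : ℕ → W, IsPath K.R π ∧ π 0 = w ∧
      ∃ i, sat K ψ (π i) ∧ ∀ j, j < i → sat K φ (π j)
  | .AR φ ψ, w => ∀ π : ℕ → W, IsPath K.R π → π 0 = w →
      ∀ i, sat K ψ (π i) ∨ ∃ j, j < i ∧ sat K φ (π j)
  | .ER φ ψ, w => ∃ π : ℕ → W, IsPath K.R π ∧ π 0 = w ∧
      ∀ i, sat K ψ (π i) ∨ ∃ j, j < i ∧ sat K φ (π j)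

def CTL.len : CTL → ℕ
  | .atom _ => 1
  | .neg φ => φ.len + 1
  | .and φ ψ => φ.len + ψ.len + 1
  | .or φ ψ => φ.len + ψ.len + 1
  | .AX φ => φ.len + 1
  | .EX φ => φ.len + 1
  | .AF φ => φ.len + 1
  | .EF φ => φ.len + 1
  | .AG φ => φ.len + 1
  | .EG φ => φ.len + 1
  | .AU φ ψ => φ.len + ψ.len + 1
  | .EU φ ψ => φ.len + ψ.len + 1
  | .AR φ ψ => φ.len + ψ.len + 1
  | .ER φ ψ => φ.len + ψ.len + 1

def CTL.td : CTL → ℕ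
  | .atom _ => 0
  | .neg φ => φ.td
  | .and φ ψ => max φ.td ψ.td
  | .or φ ψ => max φ.td ψ.td
  | .AX φ => φ.td + 1
  | .EX φ => φ.td + 1
  | .AF φ => φ.td + 1
  | .EF φ => φ.td + 1
  | .AG φ => φ.td + 1
  | .EG φ => φ.td + 1
  | .AU φ ψ => max φ.td ψ.td + 1
  | .EU φ ψ => max φ.td ψ.td + 1
  | .AR φ ψ => max φ.td ψ.td + 1
  | .ER φ ψ => max φ.td ψ.td + 1

/-- The formula uses only the temporal operators allowed by the flags:
`AX`/`EX` if `ax`, `AG`/`EF` if `ag`. -/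
def AllowOps (ax ag : Bool) : CTL → Prop
  | .atom _ => True
  | .neg φ => AllowOps ax ag φ
  | .and φ ψ => AllowOps ax ag φ ∧ AllowOps ax ag ψ
  | .or φ ψ => AllowOps ax ag φ ∧ AllowOps ax ag ψ
  | .AX φ => ax = true ∧ AllowOps ax ag φ
  | .EX φ => ax = true ∧ AllowOps ax ag φ
  | .AG φ => ag = true ∧ AllowOps ax ag φ
  | .EF φ => ag = true ∧ AllowOps ax ag φ
  | _ => False
/- ### Auxiliary lemmas -/

noncomputable def seqFrom {W : Type} {R : W → W → Prop} (hR : Serial R) (w : W) : ℕ → W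
  | 0 => w
  | n+1 => (hR (seqFrom hR w n)).choose

lemma seqFrom_isPath {W : Type} {R : W → W → Prop} (hR : Serial R) (w : W) :
    IsPath R (seqFrom hR w) :=
  fun i => (hR (seqFrom hR w i)).choose_spec

lemma path_reach {W : Type} {R : W → W → Prop} {π : ℕ → W} (hπ : IsPath R π) :
    ∀ i, Relation.ReflTransGen R (π 0) (π i)
  | 0 => .refl
  | i+1 => (path_reach hπ i).tail (hπ i)

lemma reach_exists_path {W : Type} {R : W → W → Prop} (hR : Serial R) {w v : W}
    (h : Relation.ReflTransGen R w v) : ∃ π, IsPath R π ∧ π 0 = w ∧ ∃ i, π i = v := by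
  induction h using Relation.ReflTransGen.head_induction_on with
  | refl => exact ⟨seqFrom hR v, seqFrom_isPath hR v, rfl, 0, rfl⟩
  | head hab _ ih =>
      obtain ⟨π, hπ, h0, i, hi⟩ := ih
      refine ⟨fun k => match k with | 0 => _ | m+1 => π m, ?_, rfl, i+1, hi⟩
      intro k
      match k with
      | 0 => simpa [h0] using hab
      | m+1 => exact hπ m

lemma sat_EX_iff {W : Type} {K : Kripke W} (hS : Serial K.R) (ψ : CTL) (w : W) :
    sat K (.EX ψ) w ↔ ∃ v, K.R w v ∧ sat K ψ v := by
  constructor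
  · rintro ⟨π, hπ, h0, hψ⟩; exact ⟨π 1, h0 ▸ hπ 0, hψ⟩
  · rintro ⟨v, hv, hψ⟩
    refine ⟨fun k => match k with | 0 => w | m+1 => seqFrom hS v m, ?_, rfl, hψ⟩
    intro k
    match k with
    | 0 => exact hv
    | m+1 => exact seqFrom_isPath hS v m

lemma sat_AX_iff {W : Type} {K : Kripke W} (hS : Serial K.R) (ψ : CTL) (w : W) :
    sat K (.AX ψ) w ↔ ∀ v, K.R w v → sat K ψ v := by
  constructor
  · intro h v hv
    exact h (fun k => match k with | 0 => w | m+1 => seqFrom hS v m)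
      (fun k => match k with | 0 => hv | m+1 => seqFrom_isPath hS v m) rfl
  · intro h π hπ h0
    exact h (π 1) (h0 ▸ hπ 0)

lemma sat_EF_iff {W : Type} {K : Kripke W} (hS : Serial K.R) (ψ : CTL) (w : W) :
    sat K (.EF ψ) w ↔ ∃ v, Relation.ReflTransGen K.R w v ∧ sat K ψ v := by
  constructor
  · rintro ⟨π, hπ, h0, i, hψ⟩; exact ⟨π i, h0 ▸ path_reach hπ i, hψ⟩
  · rintro ⟨v, hv, hψ⟩
    obtain ⟨π, hπ, h0, i, hi⟩ := reach_exists_path hS hv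
    exact ⟨π, hπ, h0, i, hi ▸ hψ⟩

lemma sat_AG_iff {W : Type} {K : Kripke W} (hS : Serial K.R) (ψ : CTL) (w : W) :
    sat K (.AG ψ) w ↔ ∀ v, Relation.ReflTransGen K.R w v → sat K ψ v := by
  constructor
  · intro h v hv
    obtain ⟨π, hπ, h0, i, hi⟩ := reach_exists_path hS hv
    exact hi ▸ h π hπ h0 i
  · intro h π hπ h0 i
    exact h (π i) (h0 ▸ path_reach hπ i)

lemma sat_td0 {W W' : Type} {K : Kripke W} {K' : Kripke W'} {u : W} {u' : W'}
    (h : ∀ p, K.V p u ↔ K'.V p u') : ∀ (ψ : CTL), ψ.td = 0 → (sat K ψ u ↔ sat K' ψ u') := by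
  intro ψ
  induction ψ with
  | atom p => intro _; exact h p
  | neg ψ ih => intro ht; exact not_congr (ih ht)
  | and ψ χ ih1 ih2 =>
      intro ht; simp only [CTL.td, Nat.max_eq_zero_iff] at ht
      exact and_congr (ih1 ht.1) (ih2 ht.2)
  | or ψ χ ih1 ih2 =>
      intro ht; simp only [CTL.td, Nat.max_eq_zero_iff] at ht
      exact or_congr (ih1 ht.1) (ih2 ht.2)
  | AX ψ ih => intro ht; simp [CTL.td] at ht
  | EX ψ ih => intro ht; simp [CTL.td] at ht
  | AF ψ ih => intro ht; simp [CTL.td] at ht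
  | EF ψ ih => intro ht; simp [CTL.td] at ht
  | AG ψ ih => intro ht; simp [CTL.td] at ht
  | EG ψ ih => intro ht; simp [CTL.td] at ht
  | AU ψ χ ih1 ih2 => intro ht; simp [CTL.td] at ht
  | EU ψ χ ih1 ih2 => intro ht; simp [CTL.td] at ht
  | AR ψ χ ih1 ih2 => intro ht; simp [CTL.td] at ht
  | ER ψ χ ih1 ih2 => intro ht; simp [CTL.td] at ht

def CTL.subs : CTL → List CTL
  | .atom p => [.atom p]
  | .neg φ => .neg φ :: φ.subs
  | .and φ ψ => .and φ ψ :: (φ.subs ++ ψ.subs)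
  | .or φ ψ => .or φ ψ :: (φ.subs ++ ψ.subs)
  | .AX φ => .AX φ :: φ.subs
  | .EX φ => .EX φ :: φ.subs
  | .AF φ => .AF φ :: φ.subs
  | .EF φ => .EF φ :: φ.subs
  | .AG φ => .AG φ :: φ.subs
  | .EG φ => .EG φ :: φ.subs
  | .AU φ ψ => .AU φ ψ :: (φ.subs ++ ψ.subs)
  | .EU φ ψ => .EU φ ψ :: (φ.subs ++ ψ.subs)
  | .AR φ ψ => .AR φ ψ :: (φ.subs ++ ψ.subs)
  | .ER φ ψ => .ER φ ψ :: (φ.subs ++ ψ.subs)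

lemma self_mem_subs (φ : CTL) : φ ∈ φ.subs := by
  cases φ <;> simp [CTL.subs]

lemma subs_length_le (φ : CTL) : φ.subs.length ≤ φ.len := by
  induction φ <;> simp_all [CTL.subs, CTL.len] <;> omega

lemma len_pos (φ : CTL) : 1 ≤ φ.len := by
  cases φ <;> simp [CTL.len]
/- ### The small model construction -/

abbrev SW (n : ℕ) : Type := Unit ⊕ Fin (n+1) ⊕ Fin n

def smallR (ax ag : Bool) (n : ℕ) : SW n → SW n → Prop
  | .inl _, .inl _ => ax = false
  | .inl _, .inr (.inl _) => ax = true
  | .inl _, .inr (.inr _) => ax = false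
  | .inr (.inl j), .inr (.inl j') => j = j'
  | .inr (.inl _), .inr (.inr _) => ag = true
  | .inr (.inr i), .inr (.inr i') => i = i'
  | _, _ => False

lemma smallR_serial (ax ag : Bool) (n : ℕ) : Serial (smallR ax ag n) := by
  rintro (x | j | i)
  · by_cases h : ax = true
    · exact ⟨.inr (.inl ⟨0, Nat.succ_pos n⟩), h⟩
    · exact ⟨.inl (), by simpa [smallR] using h⟩
  · exact ⟨.inr (.inl j), rfl⟩
  · exact ⟨.inr (.inr i), rfl⟩

def ht (ax ag : Bool) {n : ℕ} : SW n → ℕ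
  | .inl _ => 0
  | .inr (.inl _) => cond ax 1 0
  | .inr (.inr _) => cond ax 1 0 + cond ag 1 0

lemma ht_lt (ax ag : Bool) {n : ℕ} (x : SW n) :
    ht ax ag x < cond ax 1 0 + cond ag 1 0 + 1 := by
  rcases x with x | j | i <;> simp [ht] <;> omega

lemma smallR_step (ax ag : Bool) (n : ℕ) (hor : ax = true ∨ ag = true) {x y : SW n}
    (h : smallR ax ag n x y) : y = x ∨ ht ax ag x < ht ax ag y := by
  rcases x with x | j | i <;> rcases y with y | j' | i'
  · left; rfl
  · right; simp only [smallR] at h; simp [ht, h]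
  · right; simp only [smallR] at h
    rcases hor with hor | hor
    · rw [h] at hor; exact absurd hor (by simp)
    · simp [ht, h, hor]
  · exact absurd h (by simp [smallR])
  · left; simp only [smallR] at h; rw [h]
  · right; simp only [smallR] at h; simp only [ht, h, cond_true]; omega
  · exact absurd h (by simp [smallR])
  · exact absurd h (by simp [smallR])
  · left; simp only [smallR] at h; rw [h]

lemma smallR_extent (ax ag : Bool) (n : ℕ) (hor : ax = true ∨ ag = true)
    (π : ℕ → SW n) (hπ : IsPath (smallR ax ag n) π) :
    (Set.range π).ncard ≤ (cond ax 1 0 + cond ag 1 0) + 1 := by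
  have step : ∀ i, π (i+1) = π i ∨ ht ax ag (π i) < ht ax ag (π (i+1)) :=
    fun i => smallR_step ax ag n hor (hπ i)
  have mono : ∀ i j, i ≤ j → ht ax ag (π i) ≤ ht ax ag (π j) := by
    intro i j hij
    induction j, hij using Nat.le_induction with
    | base => exact le_refl _
    | succ j hij ih =>
        rcases step j with he | hlt
        · rw [he]; exact ih
        · exact ih.trans hlt.le
  have const : ∀ i j, i ≤ j → ht ax ag (π i) = ht ax ag (π j) → π j = π i := by
    intro i j hij
    induction j, hij using Nat.le_induction with
    | base => intro _; rfl
    | succ j hij ih =>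
        intro he
        have h1 : ht ax ag (π j) = ht ax ag (π i) :=
          le_antisymm (he ▸ mono j (j+1) (Nat.le_succ j)) (mono i j hij)
        rcases step j with h2 | h2
        · rw [h2]; exact ih h1.symm
        · exact absurd (he ▸ h2) (by rw [h1]; exact lt_irrefl _)
  have hinj : Set.InjOn (ht ax ag) (Set.range π) := by
    rintro _ ⟨i, rfl⟩ _ ⟨j, rfl⟩ h
    rcases le_total i j with hij | hij
    · exact (const i j hij h).symm
    · exact const j i hij h.symm
  calc (Set.range π).ncard = (ht ax ag '' Set.range π).ncard :=
        (Set.ncard_image_of_injOn hinj).symm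
    _ ≤ (↑(Finset.range (cond ax 1 0 + cond ag 1 0 + 1)) : Set ℕ).ncard := by
        apply Set.ncard_le_ncard
        · rintro _ ⟨x, -, rfl⟩
          simp only [Finset.coe_range, Set.mem_Iio]
          exact ht_lt ax ag x
        · exact (Finset.range _).finite_toSet
    _ = _ := by rw [Set.ncard_coe_finset, Finset.card_range]
/- ### Witnesses -/

section Witness

variable {W : Type} (K : Kripke W) (w0 : W)

def sCond (K : Kripke W) : CTL → W → Prop
  | .EX ψ => fun v => sat K ψ v
  | .AX ψ => fun v => ¬ sat K ψ v
  | _ => fun _ => True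

def uCond (K : Kripke W) : CTL → W → Prop
  | .EF ψ => fun v => sat K ψ v
  | .AG ψ => fun v => ¬ sat K ψ v
  | _ => fun _ => True

open Classical in
noncomputable def sWit (hS : Serial K.R) (L : List CTL) (j : Fin (L.length + 1)) : W :=
  if h : ∃ v, K.R w0 v ∧ sCond K (L.getD j (.atom 0)) v then h.choose else (hS w0).choose

open Classical in
noncomputable def uWit (L : List CTL) (i : Fin L.length) : W :=
  if h : ∃ v, Relation.ReflTransGen K.R w0 v ∧ uCond K (L.get i) v then h.choose else w0

lemma sWit_succ (hS : Serial K.R) (L : List CTL) (j : Fin (L.length + 1)) :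
    K.R w0 (sWit K w0 hS L j) := by
  unfold sWit; split
  · next h => exact h.choose_spec.1
  · exact (hS w0).choose_spec

lemma sWit_spec (hS : Serial K.R) (L : List CTL) (j : Fin (L.length + 1))
    (h : ∃ v, K.R w0 v ∧ sCond K (L.getD j (.atom 0)) v) :
    sCond K (L.getD j (.atom 0)) (sWit K w0 hS L j) := by
  unfold sWit; rw [dif_pos h]; exact h.choose_spec.2

lemma uWit_reach (L : List CTL) (i : Fin L.length) :
    Relation.ReflTransGen K.R w0 (uWit K w0 L i) := by
  unfold uWit; split
  · next h => exact h.choose_spec.1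
  · exact .refl

lemma uWit_spec (L : List CTL) (i : Fin L.length)
    (h : ∃ v, Relation.ReflTransGen K.R w0 v ∧ uCond K (L.get i) v) :
    uCond K (L.get i) (uWit K w0 L i) := by
  unfold uWit; rw [dif_pos h]; exact h.choose_spec.2

noncomputable def den (hS : Serial K.R) (L : List CTL) : SW L.length → W
  | .inl _ => w0
  | .inr (.inl j) => sWit K w0 hS L j
  | .inr (.inr i) => uWit K w0 L i

lemma den_reach (hS : Serial K.R) (L : List CTL) (x : SW L.length) :
    Relation.ReflTransGen K.R w0 (den K w0 hS L x) := by
  rcases x with x | j | i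
  · exact .refl
  · exact .single (sWit_succ K w0 hS L j)
  · exact uWit_reach K w0 L i

end Witness

lemma reach_U {ax ag : Bool} {n : ℕ} (hag : ag = true) (j : Fin (n+1)) (i : Fin n) :
    Relation.ReflTransGen (smallR ax ag n) (.inl ()) (.inr (.inr i)) := by
  by_cases hax : ax = true
  · exact .head (show smallR ax ag n (.inl ()) (.inr (.inl j)) from hax)
      (.single (show smallR ax ag n (.inr (.inl j)) (.inr (.inr i)) from hag))
  · exact .single (show smallR ax ag n (.inl ()) (.inr (.inr i)) from by simpa [smallR] using hax)

lemma root_succ {ax ag : Bool} {n : ℕ} (hax : ax = true) {y : SW n}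
    (h : smallR ax ag n (.inl ()) y) : ∃ j, y = .inr (.inl j) := by
  rcases y with y | j | i
  · exact absurd (show ax = false from h) (by simp [hax])
  · exact ⟨j, rfl⟩
  · exact absurd (show ax = false from h) (by simp [hax])

lemma getD_castSucc (L : List CTL) (i : Fin L.length) :
    L.getD i.castSucc (.atom 0) = L.get i := by
  rw [List.getD_eq_getElem _ _ (by simpa using i.isLt)]
  simp [List.get_eq_getElem]
lemma main_iff {W : Type} (K : Kripke W) (w0 : W) (hS : Serial K.R) (ax ag : Bool)
    (hor : ax = true ∨ ag = true) (L : List CTL)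
    (K' : Kripke (SW L.length)) (hR : K'.R = smallR ax ag L.length)
    (hV : ∀ p x, K'.V p x ↔ K.V p (den K w0 hS L x)) :
    ∀ χ : CTL, χ.subs ⊆ L → AllowOps ax ag χ → χ.td ≤ 1 →
      (sat K' χ (Sum.inl ()) ↔ sat K χ w0) := by
  have hS' : Serial K'.R := hR ▸ smallR_serial ax ag L.length
  have hden : ∀ (ψ : CTL), ψ.td = 0 → ∀ x, sat K' ψ x ↔ sat K ψ (den K w0 hS L x) :=
    fun ψ h x => sat_td0 (fun p => hV p x) ψ h
  intro χ
  induction χ with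
  | atom p => intro _ _ _; exact hV p (Sum.inl ())
  | neg ψ ih =>
      intro hsub hA ht
      exact not_congr (ih (fun x hx => hsub (List.mem_cons_of_mem _ hx)) hA ht)
  | and ψ χ ih1 ih2 =>
      intro hsub hA ht
      simp only [CTL.td, max_le_iff] at ht
      exact and_congr
        (ih1 (fun x hx => hsub (List.mem_cons_of_mem _ (List.mem_append_left _ hx))) hA.1 ht.1)
        (ih2 (fun x hx => hsub (List.mem_cons_of_mem _ (List.mem_append_right _ hx))) hA.2 ht.2)
  | or ψ χ ih1 ih2 =>
      intro hsub hA ht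
      simp only [CTL.td, max_le_iff] at ht
      exact or_congr
        (ih1 (fun x hx => hsub (List.mem_cons_of_mem _ (List.mem_append_left _ hx))) hA.1 ht.1)
        (ih2 (fun x hx => hsub (List.mem_cons_of_mem _ (List.mem_append_right _ hx))) hA.2 ht.2)
  | AX ψ ih =>
      intro hsub hA ht
      obtain ⟨hax, -⟩ := hA
      have htψ : ψ.td = 0 := by simp only [CTL.td] at ht; omega
      obtain ⟨i, hi⟩ := List.mem_iff_get.mp (hsub (self_mem_subs _))
      rw [sat_AX_iff hS', sat_AX_iff hS]
      constructor
      · intro hnew v hv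
        by_contra hψ
        have hex : ∃ u, K.R w0 u ∧ sCond K (L.getD i.castSucc (.atom 0)) u := by
          rw [getD_castSucc, hi]; exact ⟨v, hv, hψ⟩
        have hw := sWit_spec K w0 hS L i.castSucc hex
        rw [getD_castSucc, hi] at hw
        exact hw ((hden ψ htψ _).mp
          (hnew (.inr (.inl i.castSucc)) (by rw [hR]; exact hax)))
      · intro horig y hy
        rw [hR] at hy
        obtain ⟨j, rfl⟩ := root_succ hax hy
        exact (hden ψ htψ _).mpr (horig _ (sWit_succ K w0 hS L j))
  | EX ψ ih =>
      intro hsub hA ht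
      obtain ⟨hax, -⟩ := hA
      have htψ : ψ.td = 0 := by simp only [CTL.td] at ht; omega
      obtain ⟨i, hi⟩ := List.mem_iff_get.mp (hsub (self_mem_subs _))
      rw [sat_EX_iff hS', sat_EX_iff hS]
      constructor
      · rintro ⟨y, hy, hψy⟩
        rw [hR] at hy
        obtain ⟨j, rfl⟩ := root_succ hax hy
        exact ⟨_, sWit_succ K w0 hS L j, (hden ψ htψ _).mp hψy⟩
      · rintro ⟨v, hv, hψv⟩
        have hex : ∃ u, K.R w0 u ∧ sCond K (L.getD i.castSucc (.atom 0)) u := by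
          rw [getD_castSucc, hi]; exact ⟨v, hv, hψv⟩
        have hw := sWit_spec K w0 hS L i.castSucc hex
        rw [getD_castSucc, hi] at hw
        exact ⟨.inr (.inl i.castSucc), by rw [hR]; exact hax, (hden ψ htψ _).mpr hw⟩
  | AG ψ ih =>
      intro hsub hA ht
      obtain ⟨hag, -⟩ := hA
      have htψ : ψ.td = 0 := by simp only [CTL.td] at ht; omega
      obtain ⟨i, hi⟩ := List.mem_iff_get.mp (hsub (self_mem_subs _))
      rw [sat_AG_iff hS', sat_AG_iff hS]
      constructor
      · intro hnew v hv
        by_contra hψ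
        have hex : ∃ u, Relation.ReflTransGen K.R w0 u ∧ uCond K (L.get i) u := by
          rw [hi]; exact ⟨v, hv, hψ⟩
        have hw := uWit_spec K w0 L i hex
        rw [hi] at hw
        exact hw ((hden ψ htψ _).mp (hnew (.inr (.inr i)) (by rw [hR]; exact reach_U hag 0 i)))
      · intro horig x hx
        exact (hden ψ htψ _).mpr (horig _ (den_reach K w0 hS L x))
  | EF ψ ih =>
      intro hsub hA ht
      obtain ⟨hag, -⟩ := hA
      have htψ : ψ.td = 0 := by simp only [CTL.td] at ht; omega
      obtain ⟨i, hi⟩ := List.mem_iff_get.mp (hsub (self_mem_subs _))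
      rw [sat_EF_iff hS', sat_EF_iff hS]
      constructor
      · rintro ⟨x, hx, hψx⟩
        exact ⟨den K w0 hS L x, den_reach K w0 hS L x, (hden ψ htψ _).mp hψx⟩
      · rintro ⟨v, hv, hψv⟩
        have hex : ∃ u, Relation.ReflTransGen K.R w0 u ∧ uCond K (L.get i) u := by
          rw [hi]; exact ⟨v, hv, hψv⟩
        have hw := uWit_spec K w0 L i hex
        rw [hi] at hw
        exact ⟨.inr (.inr i), by rw [hR]; exact reach_U hag 0 i, (hden ψ htψ _).mpr hw⟩
  | AF ψ ih => intro _ hA _; exact hA.elim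
  | EG ψ ih => intro _ hA _; exact hA.elim
  | AU ψ χ ih1 ih2 => intro _ hA _; exact hA.elim
  | EU ψ χ ih1 ih2 => intro _ hA _; exact hA.elim
  | AR ψ χ ih1 ih2 => intro _ hA _; exact hA.elim
  | ER ψ χ ih1 ih2 => intro _ hA _; exact hA.elim

/-- Let `T ⊆ {AX, AG}` be nonempty (described by the flags `ax`, `ag`) and `φ` a
satisfiable flat CTL formula (temporal depth ≤ 1) over the standard Boolean base using
only the operators in `T` and their duals.  Then `φ` has a serial model of extent at
most `|T|` (every path visits at most `|T| + 1` distinct worlds) and of size `O(|φ|)`. -/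
theorem flat_AXAG_small_models :
    ∃ C : ℕ, 0 < C ∧ ∀ (ax ag : Bool), (ax = true ∨ ag = true) →
      ∀ φ : CTL, AllowOps ax ag φ → φ.td ≤ 1 →
      (∃ (W : Type) (K : Kripke W) (w : W), Serial K.R ∧ sat K φ w) →
      ∃ (W : Type) (inst : Fintype W) (K : Kripke W) (w : W),
        Serial K.R ∧ sat K φ w ∧
        @Fintype.card W inst ≤ C * φ.len ∧
        (∀ π : ℕ → W, IsPath K.R π →
          (Set.range π).ncard ≤ ((cond ax 1 0) + (cond ag 1 0)) + 1) := by
  refine ⟨4, by norm_num, ?_⟩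
  intro ax ag hor φ hAllow htd hsat
  obtain ⟨W, K, w0, hS, hφ⟩ := hsat
  refine ⟨SW φ.subs.length, inferInstance,
    ⟨smallR ax ag φ.subs.length, fun p x => K.V p (den K w0 hS φ.subs x)⟩, Sum.inl (),
    smallR_serial ax ag φ.subs.length, ?_, ?_, ?_⟩
  · exact (main_iff K w0 hS ax ag hor φ.subs _ rfl (fun _ _ => Iff.rfl) φ
      (List.Subset.refl _) hAllow htd).mpr hφ
  · have h1 : φ.subs.length ≤ φ.len := subs_length_le φ
    have h2 : 1 ≤ φ.len := len_pos φ
    have hc : Fintype.card (SW φ.subs.length) = 1 + ((φ.subs.length + 1) + φ.subs.length) := by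
      simp [SW]
    rw [hc]; omega
  · intro π hπ
    exact smallR_extent ax ag φ.subs.length hor π hπ
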